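/- There exists a Borel measurable map f : Mat(N,ℝ) → O(N) such that for every N×N real matrix m one has m = (m mᵀ)^{1/2} · f(m), where (m mᵀ)^{1/2} denotes the positive semidefinite square root of m mᵀ. Consequently, for any real random matrix A there is a σ(A)-measurable random orthogonal matrix U with A = (A Aᵀ)^{1/2}·U almost surely. -/

import Mathlib

open MeasureTheory ProbabilityTheory Matrix Filter
open scoped ENNReal Topology

noncomputable section

/-- The space of `N × N` real matrices. -/
abbrev Mat (N : ℕ) := Matrix (Fin N) (Fin N) ℝ

instance (N : ℕ) : MeasurableSpace (Mat N) :=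
  inferInstanceAs (MeasurableSpace (Fin N → Fin N → ℝ))

instance (N : ℕ) : BorelSpace (Mat N) :=
  inferInstanceAs (BorelSpace (Fin N → Fin N → ℝ))

open scoped Classical in
/-- The eigenvalues of a matrix (junk value `0` if the matrix is not symmetric). -/
def eigs {N : ℕ} (s : Mat N) : Fin N → ℝ :=
  if h : s.IsHermitian then h.eigenvalues else fun _ => 0

/-- The largest eigenvalue of a symmetric matrix. -/
def lambdaMax {N : ℕ} (s : Mat N) : ℝ := ⨆ i, eigs s i

/-- The eigenvalues of a symmetric matrix in nonincreasing order:
`eigDesc s k` is the `(k+1)`-th largest eigenvalue `λ_{k+1}(s)`. -/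
def eigDesc {N : ℕ} (s : Mat N) (k : Fin N) : ℝ :=
  (eigs s ∘ Tuple.sort (eigs s)) k.rev

open scoped Classical in
/-- The positive semidefinite square root of a positive semidefinite matrix
(junk value `0` otherwise). -/
def msqrt {N : ℕ} (a : Mat N) : Mat N :=
  if h : a.PosSemidef then
    (h.1.eigenvectorUnitary : Mat N) * diagonal (fun i => Real.sqrt (h.1.eigenvalues i)) *
      (star h.1.eigenvectorUnitary : Mat N)
  else 0

/-- `log⁺ x = max (log x) 0`. -/
def logPlus (x : ℝ) : ℝ := max (Real.log x) 0

/-- The expectation of a (not necessarily integrable) real random variable, with values in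
`[-∞, +∞]`: the difference of the lower integrals of the positive and negative parts. -/
def sInt {Ω : Type*} [MeasurableSpace Ω] (P : Measure Ω) (f : Ω → ℝ) : EReal :=
  ((∫⁻ ω, ENNReal.ofReal (f ω) ∂P : ℝ≥0∞) : EReal) -
    ((∫⁻ ω, ENNReal.ofReal (-f ω) ∂P : ℝ≥0∞) : EReal)

/-- `leftProd A n = A₁ ⋯ A_n` (`0`-indexed: `A 0 * A 1 * ⋯ * A (n-1)`). -/
def leftProd {Ω : Type*} {N : ℕ} (A : ℕ → Ω → Mat N) : ℕ → Ω → Mat N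
  | 0 => fun _ => 1
  | n + 1 => fun ω => leftProd A n ω * A n ω

/-- The top Lyapunov exponent
`γ = inf_{n ≥ 1} (1/n) E[log λ_max(A₁ ⋯ A_n A_nᵀ ⋯ A₁ᵀ)]`, a value in `[-∞, +∞)`. -/
def lyap {Ω : Type*} [MeasurableSpace Ω] {N : ℕ} (P : Measure Ω) (A : ℕ → Ω → Mat N) : EReal :=
  ⨅ n : ℕ, (((1 : ℝ) / (n + 1) : ℝ) : EReal) *
    sInt P (fun ω => Real.log (lambdaMax (leftProd A (n + 1) ω * (leftProd A (n + 1) ω)ᵀ)))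

/-- The `k × k` leading principal submatrix. -/
def subK {N k : ℕ} (hk : k ≤ N) (x : Mat N) : Mat k :=
  x.submatrix (Fin.castLE hk) (Fin.castLE hk)

end


namespace MeasurablePolarAux

open Polynomial
open scoped Classical

variable {N : ℕ}

noncomputable abbrev matNAG : NormedAddCommGroup (Mat N) :=
  { (Matrix.normedAddCommGroup : NormedAddCommGroup (Mat N)) with
    toMetricSpace :=
      (Matrix.normedAddCommGroup : NormedAddCommGroup (Mat N)).toMetricSpace.replaceTopology rfl }

noncomputable abbrev matNSp : @NormedSpace ℝ (Mat N) _ matNAG.toSeminormedAddCommGroup :=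
  letI : SeminormedAddCommGroup (Mat N) := Matrix.seminormedAddCommGroup
  { norm_smul_le := (Matrix.normedSpace : NormedSpace ℝ (Mat N)).norm_smul_le }

attribute [local instance] matNAG matNSp

instance matSecondCountable : SecondCountableTopology (Mat N) :=
  inferInstanceAs (SecondCountableTopology (Fin N → Fin N → ℝ))

open scoped MatrixOrder in
lemma msqrt_eq_cfc {a : Mat N} (h : a.PosSemidef) : msqrt a = CFC.sqrt a := by
  rw [msqrt, dif_pos h, CFC.sqrt_eq_cfc, cfc_nnreal_eq_real _ a, h.1.cfc_eq]
  simp [IsHermitian.cfc, Function.comp_def]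
  simp only [max_eq_left (h.eigenvalues_nonneg _)]

open scoped MatrixOrder in
lemma msqrt_posSemidef {a : Mat N} (h : a.PosSemidef) : (msqrt a).PosSemidef := by
  rw [msqrt_eq_cfc h]
  exact (CFC.sqrt_nonneg a).posSemidef

open scoped MatrixOrder in
lemma msqrt_mul_self {a : Mat N} (h : a.PosSemidef) : msqrt a * msqrt a = a := by
  rw [msqrt_eq_cfc h]
  exact CFC.sqrt_mul_sqrt_self a h.nonneg

open scoped MatrixOrder in
lemma eq_msqrt_of_sq_eq {a b : Mat N} (hb : b.PosSemidef) (ha : a.PosSemidef) (h : b ^ 2 = a) :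
    b = msqrt a := by
  rw [msqrt_eq_cfc ha]
  exact ((CFC.sqrt_eq_iff a b ha.nonneg hb.nonneg).2 (by rw [← sq]; exact h)).symm

/-- The polar relation: `u` is orthogonal and `m uᵀ` is positive semidefinite. -/
def PRel {N : ℕ} (m u : Mat N) : Prop := u * uᵀ = 1 ∧ (m * uᵀ).PosSemidef

lemma continuous_quad (y x : Fin N → ℝ) : Continuous fun s : Mat N => y ⬝ᵥ (s *ᵥ x) := by
  simp only [dotProduct, mulVec]
  exact continuous_finset_sum _ fun i _ => continuous_const.mul <|
    continuous_finset_sum _ fun j _ =>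
      ((continuous_id.matrix_elem i j).mul continuous_const)

lemma isClosed_posSemidef : IsClosed {s : Mat N | s.PosSemidef} := by
  have h : {s : Mat N | s.PosSemidef} =
      {s : Mat N | sᴴ = s} ∩ ⋂ x : Fin N → ℝ, {s : Mat N | 0 ≤ star x ⬝ᵥ (s *ᵥ x)} := by
    ext s
    simp only [Set.mem_setOf_eq, Set.mem_inter_iff, Set.mem_iInter]
    exact Matrix.posSemidef_iff_dotProduct_mulVec
  rw [h]
  exact (isClosed_eq (continuous_id.matrix_conjTranspose) continuous_id).inter <|
    isClosed_iInter fun x => isClosed_le continuous_const (continuous_quad _ _)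

lemma isClosed_orth : IsClosed {u : Mat N | u * uᵀ = 1} :=
  isClosed_eq (continuous_id.matrix_mul continuous_id.matrix_transpose) continuous_const

lemma isCompact_orth : IsCompact {u : Mat N | u * uᵀ = 1} := by
  refine IsCompact.of_isClosed_subset (isCompact_closedBall (0 : Mat N) 1) isClosed_orth ?_
  intro u hu
  rw [Metric.mem_closedBall, dist_zero_right]
  rw [Matrix.norm_le_iff (by norm_num : (0:ℝ) ≤ 1)]
  intro i j
  have h1 : (u * uᵀ) i i = 1 := by rw [hu]; exact Matrix.one_apply_eq i
  have h2 : ∑ k, u i k * u i k = 1 := by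
    rw [← h1, Matrix.mul_apply]; rfl
  have h3 : u i j * u i j ≤ 1 := by
    rw [← h2]
    exact Finset.single_le_sum (fun k _ => mul_self_nonneg (u i k)) (Finset.mem_univ j)
  rw [Real.norm_eq_abs]
  exact abs_le_one_iff_mul_self_le_one.mpr h3

lemma psd_mul_transpose (m : Mat N) : (m * mᵀ).PosSemidef := by
  simpa [Matrix.conjTranspose_eq_transpose_of_trivial] using
    Matrix.posSemidef_self_mul_conjTranspose m

lemma rel_of_isUnit {m : Mat N} (hm : m.det ≠ 0) : ∃ u, PRel m u := by
  have hpsd : (m * mᵀ).PosSemidef := psd_mul_transpose m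
  set s : Mat N := msqrt (m * mᵀ) with hs_def
  have hspsd : s.PosSemidef := msqrt_posSemidef hpsd
  have hss : s * s = m * mᵀ := msqrt_mul_self hpsd
  have hsT : sᵀ = s := by
    rw [← Matrix.conjTranspose_eq_transpose_of_trivial]
    exact hspsd.isHermitian.eq
  have hdet : IsUnit s.det := by
    rw [isUnit_iff_ne_zero]
    intro h0
    have := congrArg Matrix.det hss
    rw [Matrix.det_mul, Matrix.det_mul, Matrix.det_transpose, h0, mul_zero] at this
    exact hm (by nlinarith [this])
  have hinvl : s⁻¹ * s = 1 := Matrix.nonsing_inv_mul s hdet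
  have hinvr : s * s⁻¹ = 1 := Matrix.mul_nonsing_inv s hdet
  have hsiT : (s⁻¹)ᵀ = s⁻¹ := by rw [Matrix.transpose_nonsing_inv, hsT]
  refine ⟨s⁻¹ * m, ?_, ?_⟩
  · have h : (s⁻¹ * m)ᵀ = mᵀ * s⁻¹ := by rw [Matrix.transpose_mul, hsiT]
    rw [h]
    calc s⁻¹ * m * (mᵀ * s⁻¹) = s⁻¹ * (m * mᵀ) * s⁻¹ := by
          simp only [mul_assoc]
      _ = s⁻¹ * (s * s) * s⁻¹ := by rw [hss]
      _ = (s⁻¹ * s) * (s * s⁻¹) := by simp only [mul_assoc]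
      _ = 1 := by rw [hinvl, hinvr, mul_one]
  · have h : (s⁻¹ * m)ᵀ = mᵀ * s⁻¹ := by rw [Matrix.transpose_mul, hsiT]
    rw [h]
    have h2 : m * (mᵀ * s⁻¹) = s := by
      calc m * (mᵀ * s⁻¹) = (m * mᵀ) * s⁻¹ := by rw [mul_assoc]
        _ = (s * s) * s⁻¹ := by rw [hss]
        _ = s * (s * s⁻¹) := by rw [mul_assoc]
        _ = s := by rw [hinvr, mul_one]
    rw [h2]
    exact hspsd

lemma eval_charpoly_neg (m : Mat N) (t : ℝ) :
    ((-m).charpoly).eval t = (m + t • 1).det := by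
  rw [Matrix.charpoly, ← Polynomial.coe_evalRingHom, RingHom.map_det]
  congr 1
  ext i j
  by_cases h : i = j
  · subst h
    simp [Matrix.map_apply, Matrix.charmatrix_apply_eq, Matrix.one_apply_eq, add_comm]
  · simp [Matrix.map_apply, Matrix.charmatrix_apply_ne _ _ _ h, Matrix.one_apply_ne h]

lemma exists_invertible_seq (m : Mat N) :
    ∃ e : ℕ → ℝ, Tendsto e atTop (𝓝 0) ∧ ∀ k, ((m + e k • 1 : Mat N)).det ≠ 0 := by
  have hfin : {x : ℝ | ((-m).charpoly).IsRoot x}.Finite :=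
    Polynomial.finite_setOf_isRoot (Matrix.charpoly_monic (-m)).ne_zero
  have hex : ∀ k : ℕ, ∃ x : ℝ,
      x ∈ Set.Ioo (0:ℝ) (1/((k:ℝ)+1)) \ {x | ((-m).charpoly).IsRoot x} := by
    intro k
    refine Set.Infinite.nonempty (Set.Infinite.diff ?_ hfin)
    exact Set.Ioo_infinite (by positivity)
  choose e he using hex
  refine ⟨e, ?_, ?_⟩
  · have h1 : ∀ k : ℕ, 0 < e k := fun k => (he k).1.1
    have h2 : ∀ k : ℕ, e k ≤ 1/((k:ℝ)+1) := fun k => le_of_lt (he k).1.2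
    refine squeeze_zero (fun k => le_of_lt (h1 k)) h2 ?_
    exact tendsto_one_div_add_atTop_nhds_zero_nat
  · intro k
    have h := (he k).2
    rw [Set.mem_setOf_eq, Polynomial.IsRoot, eval_charpoly_neg] at h
    exact h

lemma tendsto_mulT {f g : ℕ → Mat N} {a b : Mat N} (hf : Tendsto f atTop (𝓝 a))
    (hg : Tendsto g atTop (𝓝 b)) :
    Tendsto (fun k => f k * (g k)ᵀ) atTop (𝓝 (a * bᵀ)) := by
  have hgT : Tendsto (fun k => (g k)ᵀ) atTop (𝓝 bᵀ) :=
    ((continuous_id.matrix_transpose).tendsto b).comp hg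
  exact hf.mul hgT

lemma rel_exists (m : Mat N) : ∃ u, PRel m u := by
  obtain ⟨e, he0, heU⟩ := exists_invertible_seq m
  have hm : Tendsto (fun k => m + e k • (1:Mat N)) atTop (𝓝 m) := by
    have h1 : Tendsto (fun k => e k • (1:Mat N)) atTop (𝓝 ((0:ℝ) • (1:Mat N))) :=
      he0.smul_const (1 : Mat N)
    rw [zero_smul] at h1
    simpa using tendsto_const_nhds.add h1
  choose u hu using fun k => rel_of_isUnit (heU k)
  obtain ⟨a, ha, φ, hφ, hconv⟩ := isCompact_orth.tendsto_subseq (fun k => (hu k).1)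
  refine ⟨a, ha, ?_⟩
  have h1 : Tendsto (fun k => (m + e (φ k) • (1:Mat N)) * (u (φ k))ᵀ) atTop (𝓝 (m * aᵀ)) :=
    tendsto_mulT (hm.comp hφ.tendsto_atTop) hconv
  exact isClosed_posSemidef.mem_of_tendsto h1 (.of_forall fun k => (hu (φ k)).2)

lemma isClosed_hit (v : Mat N) (r : ℝ) :
    IsClosed {m : Mat N | ∃ u, PRel m u ∧ dist u v ≤ r} := by
  refine IsSeqClosed.isClosed ?_
  intro ms m hms hlim
  choose u hu hdd using hms
  obtain ⟨a, ha, φ, hφ, hconv⟩ := isCompact_orth.tendsto_subseq (fun k => (hu k).1)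
  refine ⟨a, ⟨ha, ?_⟩, ?_⟩
  · have h1 : Tendsto (fun k => ms (φ k) * (u (φ k))ᵀ) atTop (𝓝 (m * aᵀ)) :=
      tendsto_mulT (hlim.comp hφ.tendsto_atTop) hconv
    exact isClosed_posSemidef.mem_of_tendsto h1 (.of_forall fun k => (hu (φ k)).2)
  · have h2 : Tendsto (fun k => dist (u (φ k)) v) atTop (𝓝 (dist a v)) :=
      hconv.dist tendsto_const_nhds
    exact le_of_tendsto h2 (.of_forall fun k => hdd (φ k))

lemma rel_spec {m u : Mat N} (h : PRel m u) : m = msqrt (m * mᵀ) * u := by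
  obtain ⟨hu, hs⟩ := h
  have hut : uᵀ * u = 1 := mul_eq_one_comm.mp hu
  have hherm : (m * uᵀ)ᵀ = m * uᵀ := by
    rw [← Matrix.conjTranspose_eq_transpose_of_trivial]
    exact hs.isHermitian.eq
  have hsq : (m * uᵀ) ^ 2 = m * mᵀ := by
    rw [pow_two]
    calc (m * uᵀ) * (m * uᵀ) = (m * uᵀ) * (m * uᵀ)ᵀ := by rw [hherm]
      _ = m * (uᵀ * (u * mᵀ)) := by
          rw [Matrix.transpose_mul, Matrix.transpose_transpose]
          simp only [mul_assoc]
      _ = m * mᵀ := by rw [← mul_assoc uᵀ u mᵀ, hut, one_mul]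
  have hpsd : (m * mᵀ).PosSemidef := hsq ▸ hs.pow 2
  have heq : m * uᵀ = msqrt (m * mᵀ) := eq_msqrt_of_sq_eq hs hpsd hsq
  rw [← heq]
  calc m = m * (uᵀ * u) := by rw [hut, mul_one]
    _ = m * uᵀ * u := by rw [mul_assoc]

section Selection

lemma exists_dense_seq : ∃ d : ℕ → {u : Mat N // u * uᵀ = 1}, DenseRange d := by
  have : Nonempty {u : Mat N // u * uᵀ = 1} := ⟨⟨1, by simp⟩⟩
  exact TopologicalSpace.exists_dense_seq _

variable (d : ℕ → {u : Mat N // u * uᵀ = 1})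

def P (k : ℕ) (m : Mat N) (n : ℕ) : Prop :=
  ∃ u, PRel m u ∧ dist u (d n).1 ≤ (1/2 : ℝ) ^ k

lemma measurableSet_P (k n : ℕ) : MeasurableSet {m : Mat N | P d k m n} :=
  (isClosed_hit (d n).1 ((1/2 : ℝ) ^ k)).measurableSet

lemma exists_near (hd : DenseRange d) (m u : Mat N) (hu : PRel m u) {ε : ℝ} (hε : 0 < ε) :
    ∃ n, dist u (d n).1 < ε := by
  obtain ⟨n, hn⟩ := Metric.denseRange_iff.mp hd ⟨u, hu.1⟩ ε hε
  exact ⟨n, by rwa [Subtype.dist_eq] at hn⟩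

noncomputable def g : ℕ → Mat N → ℕ
  | 0 => fun m => if h : ∃ n, P d 0 m n then Nat.find h else 0
  | (k+1) => fun m => if h : ∃ n, P d (k+1) m n ∧
      dist (d n).1 (d (g k m)).1 ≤ 3 * (1/2 : ℝ) ^ (k+1) then Nat.find h else 0

variable (hd : DenseRange d)
include hd

lemma cond0 (m : Mat N) : ∃ n, P d 0 m n := by
  obtain ⟨u, hu⟩ := rel_exists m
  obtain ⟨n, hn⟩ := exists_near d hd m u hu one_pos
  exact ⟨n, u, hu, by simpa using hn.le⟩

lemma condS (k : ℕ) (m : Mat N) (hk : P d k m (g d k m)) :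
    ∃ n, P d (k+1) m n ∧ dist (d n).1 (d (g d k m)).1 ≤ 3 * (1/2 : ℝ) ^ (k+1) := by
  obtain ⟨u, hu, hdist⟩ := hk
  obtain ⟨n, hn⟩ := exists_near d hd m u hu (show (0:ℝ) < (1/2)^(k+1) by positivity)
  refine ⟨n, ⟨u, hu, hn.le⟩, ?_⟩
  calc dist (d n).1 (d (g d k m)).1 ≤ dist (d n).1 u + dist u (d (g d k m)).1 :=
        dist_triangle _ _ _
    _ ≤ (1/2:ℝ)^(k+1) + (1/2:ℝ)^k := add_le_add (by rw [dist_comm]; exact hn.le) hdist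
    _ = 3 * (1/2:ℝ)^(k+1) := by ring

lemma inv : ∀ (k : ℕ) (m : Mat N), P d k m (g d k m)
  | 0, m => by
      have h := cond0 d hd m
      simp only [g, dif_pos h]
      exact Nat.find_spec h
  | (k+1), m => by
      have hk := inv k m
      have h := condS d hd k m hk
      simp only [g, dif_pos h]
      exact (Nat.find_spec h).1

lemma step_dist (k : ℕ) (m : Mat N) :
    dist (d (g d (k+1) m)).1 (d (g d k m)).1 ≤ 3 * (1/2 : ℝ) ^ (k+1) := by
  have h := condS d hd k m (inv d hd k m)
  simp only [g, dif_pos h]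
  exact (Nat.find_spec h).2

omit hd

lemma measurable_find {Q : Mat N → ℕ → Prop} {D : ∀ m, DecidablePred (Q m)}
    (hQ : ∀ n, MeasurableSet {m | Q m n})
    (hex : ∀ m, ∃ n, Q m n) : Measurable fun m => @Nat.find _ (D m) (hex m) := by
  apply measurable_to_countable'
  intro n
  have h : (fun m => @Nat.find _ (D m) (hex m)) ⁻¹' {n} =
      {m | Q m n} ∩ ⋂ j, ⋂ _ : j < n, {m | Q m j}ᶜ := by
    ext m
    simp only [Set.mem_preimage, Set.mem_singleton_iff, Nat.find_eq_iff (hex m),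
      Set.mem_inter_iff, Set.mem_setOf_eq, Set.mem_iInter, Set.mem_compl_iff]
  rw [h]
  exact (hQ n).inter (MeasurableSet.iInter fun j => MeasurableSet.iInter fun _ => (hQ j).compl)

include hd

lemma measurable_g : ∀ k : ℕ, Measurable (g d k)
  | 0 => by
      have hex := cond0 d hd
      have h : g d 0 = fun m => Nat.find (hex m) := by
        funext m; simp only [g, dif_pos (hex m)]
      rw [h]
      exact measurable_find (fun n => measurableSet_P d 0 n) hex
  | (k+1) => by
      have hgk := measurable_g k
      have hex : ∀ m : Mat N, ∃ n, P d (k+1) m n ∧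
          dist (d n).1 (d (g d k m)).1 ≤ 3 * (1/2:ℝ)^(k+1) :=
        fun m => condS d hd k m (inv d hd k m)
      have h : g d (k+1) = fun m => Nat.find (hex m) := by
        funext m; simp only [g, dif_pos (hex m)]
      rw [h]
      refine measurable_find (fun n => ?_) hex
      have h2 : {m : Mat N | P d (k+1) m n ∧
            dist (d n).1 (d (g d k m)).1 ≤ 3 * (1/2:ℝ)^(k+1)}
          = {m | P d (k+1) m n} ∩
            (g d k) ⁻¹' {j | dist (d n).1 (d j).1 ≤ 3 * (1/2:ℝ)^(k+1)} := rfl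
      rw [h2]
      exact (measurableSet_P d (k+1) n).inter (hgk (by trivial))

omit hd

lemma exists_selector : ∃ F : Mat N → Mat N, Measurable F ∧ ∀ m, PRel m (F m) := by
  obtain ⟨d, hd⟩ := exists_dense_seq (N := N)
  set h : ℕ → Mat N → Mat N := fun k m => (d (g d k m)).1 with hh
  have hmeas : ∀ k, Measurable (h k) := fun k =>
    (measurable_from_top (f := fun j : ℕ => (d j).1)).comp (measurable_g d hd k)
  have hcauchy : ∀ m, CauchySeq fun k => h k m := by
    intro m
    refine cauchySeq_of_le_geometric (1/2) 3 (by norm_num) fun k => ?_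
    rw [dist_comm]
    calc dist (h (k+1) m) (h k m) ≤ 3 * (1/2:ℝ)^(k+1) := step_dist d hd k m
      _ ≤ 3 * (1/2:ℝ)^k := by
          have : ((1:ℝ)/2)^(k+1) ≤ (1/2)^k :=
            pow_le_pow_of_le_one (by norm_num) (by norm_num) (Nat.le_succ k)
          linarith
  have hconv : ∀ m, ∃ a, Tendsto (fun k => h k m) atTop (𝓝 a) :=
    fun m => cauchySeq_tendsto_of_complete (hcauchy m)
  choose F hF using hconv
  refine ⟨F, measurable_of_tendsto_metrizable' atTop hmeas (tendsto_pi_nhds.2 hF), ?_⟩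
  intro m
  have hw : ∀ k, ∃ u, PRel m u ∧ dist u (h k m) ≤ (1/2:ℝ)^k := fun k => inv d hd k m
  choose w hw1 hw2 using hw
  have hwt : Tendsto w atTop (𝓝 (F m)) := by
    rw [tendsto_iff_dist_tendsto_zero]
    refine squeeze_zero (fun k => dist_nonneg)
      (fun k => (dist_triangle (w k) (h k m) (F m)).trans (add_le_add_left (hw2 k) _)) ?_
    have h1 : Tendsto (fun k : ℕ => ((1:ℝ)/2)^k) atTop (𝓝 0) :=
      tendsto_pow_atTop_nhds_zero_of_lt_one (by norm_num) (by norm_num)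
    have h2 : Tendsto (fun k => dist (h k m) (F m)) atTop (𝓝 0) :=
      tendsto_iff_dist_tendsto_zero.mp (hF m)
    simpa using h1.add h2
  have hclosed : IsClosed {u : Mat N | PRel m u} := by
    have heq : {u : Mat N | PRel m u} = {u | u * uᵀ = 1} ∩ {u | (m * uᵀ).PosSemidef} := rfl
    rw [heq]
    exact isClosed_orth.inter (isClosed_posSemidef.preimage
      (continuous_const.matrix_mul continuous_id.matrix_transpose))
  exact hclosed.mem_of_tendsto hwt (.of_forall hw1)

end Selection

end MeasurablePolarAux

/-- Measurable polar decomposition: there is a Borel measurable map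
`f : Mat(N,ℝ) → O(N)` with `m = (m mᵀ)^{1/2} f(m)` for every matrix `m`; consequently,
for any random matrix `A` there is a `σ(A)`-measurable random orthogonal matrix `U` with
`A = (A Aᵀ)^{1/2} U` almost surely. -/
theorem measurable_polar_decomposition (N : ℕ) :
    ∃ f : Mat N → Mat N, Measurable f ∧
      (∀ m : Mat N, f m * (f m)ᵀ = 1) ∧
      (∀ m : Mat N, m = msqrt (m * mᵀ) * f m) ∧
      ∀ (Ω : Type) [MeasurableSpace Ω] (P : Measure Ω), IsProbabilityMeasure P →
        ∀ A : Ω → Mat N, Measurable A →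
          ∃ U : Ω → Mat N,
            Measurable[MeasurableSpace.comap A inferInstance] U ∧
            (∀ ω, U ω * (U ω)ᵀ = 1) ∧
            ∀ᵐ ω ∂P, A ω = msqrt (A ω * (A ω)ᵀ) * U ω := by
  classical
  obtain ⟨f, hf, hrel⟩ := MeasurablePolarAux.exists_selector (N := N)
  refine ⟨f, hf, fun m => (hrel m).1, fun m => MeasurablePolarAux.rel_spec (hrel m), ?_⟩
  intro Ω _ P _ A hA
  refine ⟨f ∘ A, ?_, fun ω => (hrel (A ω)).1, ?_⟩
  · exact hf.comp (measurable_iff_comap_le.mpr le_rfl)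
  · exact Filter.Eventually.of_forall fun ω => MeasurablePolarAux.rel_spec (hrel (A ω))
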